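/- Let b ≥ 2 be an integer. There is no finite set S of primes and no infinite strictly increasing sequence (n_i) of positive integers such that every repunit u_{n_i} = (b^{n_i} - 1)/(b-1) has all its prime factors in S. Equivalently, the set of primes dividing some repunit (b^n - 1)/(b-1), n ranging over any infinite set of positive integers, is infinite. -/

import Mathlib

open Finset

private lemma geom_nat (b : ℕ) (hb : 1 ≤ b) (n : ℕ) :
    (b - 1) * ∑ j ∈ Finset.range n, b ^ j = b ^ n - 1 := by
  have h1 : (1 : ℕ) ≤ b ^ n := Nat.one_le_pow _ _ hb
  have := geom_sum_mul (b : ℤ) n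
  have hcast : ((b - 1 : ℕ) : ℤ) * ((∑ j ∈ Finset.range n, b ^ j : ℕ) : ℤ)
      = ((b ^ n - 1 : ℕ) : ℤ) := by
    push_cast [Nat.cast_sub hb, Nat.cast_sub h1]
    linarith [this]
  exact_mod_cast hcast

/-- Key valuation bound: `p ^ v_p(b^n - 1) ≤ 2 * b ^ (2 * ord_p(b)) * n`. -/
private lemma key_bound (b : ℕ) (hb : 2 ≤ b) (p : ℕ) (hp : p.Prime) (n : ℕ) (hn : 0 < n)
    (hdvd : p ∣ b ^ n - 1) :
    p ^ ((b ^ n - 1).factorization p) ≤ 2 * b ^ (2 * orderOf (b : ZMod p)) * n := by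
  haveI : Fact p.Prime := ⟨hp⟩
  have hb1 : (1 : ℕ) ≤ b := by omega
  have hbn1 : (1 : ℕ) ≤ b ^ n := Nat.one_le_pow _ _ (by omega)
  -- p does not divide b
  have hpb : ¬ p ∣ b := by
    intro h
    have h1 : p ∣ b ^ n := dvd_pow h hn.ne'
    have h2 : p ∣ 1 := by
      have := Nat.dvd_sub h1 hdvd
      rwa [Nat.sub_sub_self hbn1] at this
    have := Nat.le_of_dvd one_pos h2
    have := hp.two_le
    omega
  -- b^n = 1 in ZMod p
  have hone : ((b : ZMod p)) ^ n = 1 := by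
    have h0 : ((b ^ n - 1 : ℕ) : ZMod p) = 0 := (ZMod.natCast_eq_zero_iff _ _).mpr hdvd
    rw [Nat.cast_sub hbn1, Nat.cast_pow, Nat.cast_one, sub_eq_zero] at h0
    exact h0
  set d := orderOf (b : ZMod p) with hd
  have hdn : d ∣ n := orderOf_dvd_of_pow_eq_one hone
  have hd0 : 0 < d := (isOfFinOrder_iff_pow_eq_one.mpr ⟨n, hn, hone⟩).orderOf_pos
  have hbd1 : (1 : ℕ) ≤ b ^ d := Nat.one_le_pow _ _ (by omega)
  have hpd : p ∣ b ^ d - 1 := by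
    have h1 : ((b ^ d - 1 : ℕ) : ZMod p) = 0 := by
      rw [Nat.cast_sub hbd1, Nat.cast_pow, Nat.cast_one, sub_eq_zero]
      exact pow_orderOf_eq_one (b : ZMod p)
    exact (ZMod.natCast_eq_zero_iff _ _).mp h1
  have hNne : b ^ n - 1 ≠ 0 := by
    have : 2 ≤ b ^ n := le_trans hb (Nat.le_self_pow hn.ne' b)
    omega
  rw [Nat.factorization_def _ hp]
  rcases eq_or_ne p 2 with hp2 | hp2
  · -- p = 2 : reduce to the even exponent 2n
    subst hp2
    have hbodd : ¬ 2 ∣ b := hpb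
    have hb2n : (1:ℕ) ≤ b ^ (2 * n) := Nat.one_le_pow _ _ (by omega)
    have hdvd2 : b ^ n - 1 ∣ b ^ (2 * n) - 1 := by
      have := Nat.sub_dvd_pow_sub_pow (b ^ n) 1 2
      simpa [← pow_mul, one_pow, mul_comm] using this
    have hN2ne : b ^ (2 * n) - 1 ≠ 0 := by
      have : 2 ≤ b ^ (2 * n) := le_trans hb (Nat.le_self_pow (by omega) b)
      omega
    have hvle : padicValNat 2 (b ^ n - 1) ≤ padicValNat 2 (b ^ (2 * n) - 1) := by
      rw [← Nat.factorization_def _ Nat.prime_two, ← Nat.factorization_def _ Nat.prime_two]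
      exact (Nat.Prime.pow_dvd_iff_le_factorization Nat.prime_two hN2ne).mp
        (dvd_trans (by rw [Nat.factorization_def _ Nat.prime_two]; exact pow_padicValNat_dvd) hdvd2)
    have hkey := padicValNat.pow_two_sub_pow (x := b) (y := 1) (by omega) (by omega) hbodd
      (n := 2 * n) (by omega) ⟨n, by ring⟩
    simp only [one_pow] at hkey
    -- 2 ^ (v' + 1) ≤ (b+1) * (b-1) * (2n)
    have hA : 2 ^ padicValNat 2 (b + 1) ≤ b + 1 :=
      Nat.le_of_dvd (by omega) pow_padicValNat_dvd
    have hB : 2 ^ padicValNat 2 (b - 1) ≤ b - 1 :=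
      Nat.le_of_dvd (by omega) pow_padicValNat_dvd
    have hC : 2 ^ padicValNat 2 (2 * n) ≤ 2 * n :=
      Nat.le_of_dvd (by omega) pow_padicValNat_dvd
    have hprod : 2 ^ (padicValNat 2 (b ^ (2*n) - 1) + 1) ≤ (b + 1) * (b - 1) * (2 * n) := by
      rw [hkey, pow_add, pow_add]
      exact Nat.mul_le_mul (Nat.mul_le_mul hA hB) hC
    have h2v : 2 ^ padicValNat 2 (b ^ n - 1) ≤ 2 ^ padicValNat 2 (b ^ (2*n) - 1) :=
      Nat.pow_le_pow_right (by omega) hvle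
    have hbb : (b + 1) * (b - 1) ≤ 2 * b ^ 2 := by nlinarith [Nat.sub_le b 1]
    have hb2d : b ^ 2 ≤ b ^ (2 * d) := Nat.pow_le_pow_right (by omega) (by omega)
    calc 2 ^ padicValNat 2 (b ^ n - 1)
        ≤ 2 ^ padicValNat 2 (b ^ (2*n) - 1) := h2v
      _ ≤ (b + 1) * (b - 1) * n := by
          have := hprod
          rw [pow_succ] at this
          nlinarith
      _ ≤ 2 * b ^ 2 * n := Nat.mul_le_mul_right _ hbb
      _ ≤ 2 * b ^ (2 * d) * n := Nat.mul_le_mul_right _ (Nat.mul_le_mul_left _ hb2d)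
  · -- p odd
    have hodd : Odd p := hp.odd_of_ne_two hp2
    obtain ⟨m, hm⟩ := hdn
    have hm0 : m ≠ 0 := by rintro rfl; omega
    have hbd2 : 2 ≤ b ^ d := le_trans hb (Nat.le_self_pow hd0.ne' b)
    have hkey := padicValNat.pow_sub_pow (p := p) hodd (x := b ^ d) (y := 1)
      (Nat.one_lt_pow hd0.ne' (by omega)) hpd
      (fun h => hpb (hp.dvd_of_dvd_pow h)) hm0
    rw [one_pow, ← pow_mul, ← hm] at hkey
    have hA : p ^ padicValNat p (b ^ d - 1) ≤ b ^ d - 1 :=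
      Nat.le_of_dvd (by omega) pow_padicValNat_dvd
    have hB : p ^ padicValNat p m ≤ m := Nat.le_of_dvd (by omega) pow_padicValNat_dvd
    have hmn : m ≤ n := by
      rw [hm]; exact Nat.le_mul_of_pos_left m hd0
    calc p ^ padicValNat p (b ^ n - 1)
        = p ^ padicValNat p (b ^ d - 1) * p ^ padicValNat p m := by rw [hkey, pow_add]
      _ ≤ (b ^ d - 1) * m := Nat.mul_le_mul hA hB
      _ ≤ 2 * b ^ (2 * d) * n := by
          have h1 : b ^ d - 1 ≤ 2 * b ^ (2 * d) := by
            have : b ^ d ≤ b ^ (2 * d) := Nat.pow_le_pow_right (by omega) (by omega)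
            omega
          exact Nat.mul_le_mul h1 hmn

private lemma growth (C k : ℕ) : ∃ N : ℕ, ∀ n ≥ N, C * n ^ k + 1 < 2 ^ n := by
  have h := isLittleO_pow_const_const_pow_of_one_lt (R := ℝ) k (by norm_num : (1:ℝ) < 2)
  have hc : (0:ℝ) < 1 / (C + 2) := by positivity
  have h2 := h.def hc
  rw [Filter.eventually_atTop] at h2
  obtain ⟨N, hN⟩ := h2
  refine ⟨max N 1, fun n hn => ?_⟩
  have hn1 : 1 ≤ n := le_trans (le_max_right _ _) hn
  have hnN : N ≤ n := le_trans (le_max_left _ _) hn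
  have := hN n hnN
  simp only [Real.norm_eq_abs] at this
  have habs : |(n:ℝ) ^ k| = (n:ℝ) ^ k := abs_of_nonneg (by positivity)
  have habs2 : |(2:ℝ) ^ n| = (2:ℝ) ^ n := abs_of_nonneg (by positivity)
  rw [habs, habs2] at this
  have hkey : ((C:ℝ) + 2) * (n:ℝ) ^ k ≤ 2 ^ n := by
    rw [div_mul_eq_mul_div, le_div_iff₀ (by positivity)] at this
    nlinarith [this]
  have hnk1 : (1:ℝ) ≤ (n:ℝ) ^ k := one_le_pow₀ (by exact_mod_cast hn1)
  have hreal : (C:ℝ) * (n:ℝ) ^ k + 1 < 2 ^ n := by nlinarith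
  have : ((C * n ^ k + 1 : ℕ) : ℝ) < ((2 ^ n : ℕ) : ℝ) := by push_cast; linarith
  exact_mod_cast this

theorem stmt_5 (b : ℕ) (hb : 2 ≤ b) :
    ¬ ∃ (S : Finset ℕ) (n : ℕ → ℕ), (∀ p ∈ S, p.Prime) ∧ StrictMono n ∧ (∀ i, 0 < n i) ∧
      ∀ i p, p.Prime → p ∣ (∑ j ∈ Finset.range (n i), b ^ j) → p ∈ S := by
  rintro ⟨S, n, -, hmono, hpos, hS⟩
  set T : Finset ℕ := S ∪ (b - 1).primeFactors with hT
  set f : ℕ → ℕ := fun p => 2 * b ^ (2 * orderOf (b : ZMod p)) with hf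
  set C : ℕ := ∏ p ∈ T, f p with hC
  set k : ℕ := T.card with hk
  obtain ⟨N₀, hN₀⟩ := growth C k
  set m : ℕ := n N₀ with hm
  have hmN : N₀ ≤ m := hmono.le_apply
  have hm0 : 0 < m := hpos N₀
  have hbm1 : (1:ℕ) ≤ b ^ m := Nat.one_le_pow _ _ (by omega)
  have hNne : b ^ m - 1 ≠ 0 := by
    have : 2 ≤ b ^ m := le_trans hb (Nat.le_self_pow hm0.ne' b)
    omega
  -- every prime factor of b^m - 1 lies in T
  have hfac : (b ^ m - 1).primeFactors ⊆ T := by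
    intro p hp
    have hpp : p.Prime := Nat.prime_of_mem_primeFactors hp
    have hpd : p ∣ b ^ m - 1 := Nat.dvd_of_mem_primeFactors hp
    rw [← geom_nat b (by omega) m] at hpd
    rcases (Nat.Prime.dvd_mul hpp).mp hpd with h | h
    · exact Finset.mem_union_right _ (Nat.mem_primeFactors.mpr ⟨hpp, h, by omega⟩)
    · exact Finset.mem_union_left _ (hS N₀ p hpp h)
  -- the factorization bound
  have hbound : b ^ m - 1 ≤ C * m ^ k := by
    have h1 : b ^ m - 1 = ∏ p ∈ (b ^ m - 1).primeFactors, p ^ ((b ^ m - 1).factorization p) := by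
      conv_lhs => rw [← Nat.factorization_prod_pow_eq_self hNne]
      rfl
    have h2 : ∏ p ∈ (b ^ m - 1).primeFactors, p ^ ((b ^ m - 1).factorization p)
        ≤ ∏ p ∈ (b ^ m - 1).primeFactors, (f p * m) := by
      apply Finset.prod_le_prod' 
      intro p hp
      exact key_bound b hb p (Nat.prime_of_mem_primeFactors hp) m hm0
        (Nat.dvd_of_mem_primeFactors hp)
    have h3 : ∏ p ∈ (b ^ m - 1).primeFactors, (f p * m) ≤ ∏ p ∈ T, (f p * m) := by
      apply Finset.prod_le_prod_of_subset_of_one_le' hfac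
      intro p _ _
      have : 1 ≤ f p := by
        have : 1 ≤ b ^ (2 * orderOf (b : ZMod p)) := Nat.one_le_pow _ _ (by omega)
        simp only [hf]; omega
      exact Nat.one_le_iff_ne_zero.mpr (by positivity)
    have h4 : ∏ p ∈ T, (f p * m) = C * m ^ k := by
      rw [Finset.prod_mul_distrib, Finset.prod_const, hC, hk]
    omega
  have hgrow := hN₀ m hmN
  have h2b : 2 ^ m ≤ b ^ m := Nat.pow_le_pow_left hb m
  omega
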